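/- arXiv:2308.14071 — 7 statements merged into one kernel-verified Lean document; each statement's English description precedes it below -/
import Mathlib

section
/- Let x* be a 1-2-1 feasible schedule (M = 1) with x*_p > 0 for every p ∈ 𝒫. For each path p, let θ̃_p = min over links (i,j) of p of θ_{ji} and λ̃_p = max over links (i,j) of p of λ_{ji}(x*). Then the schedule x̂ defined by x̂_p = min( x*_p , θ̃_p·x*_p/λ̃_p ) satisfies the passive-user constraint: λ_{ji}(x̂) ≤ θ_{ji} for every link (i,j). -/
/-!
Common formalization of 1-2-1 mmWave networks (Dogan–Cardone–Fragouli).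
A link is a directed edge `(i, j)` between natural-number node labels.
A path is identified with its (finite, nonempty) set of links.
-/

open Finset

abbrev Link := ℕ × ℕ

/-- Minimum of `f` over a finite set of links (0 on the empty set). -/
noncomputable def pathInf (f : Link → ℝ) (p : Finset Link) : ℝ :=
  if h : p.Nonempty then p.inf' h f else 0

/-- Maximum of `f` over a finite set of links (0 on the empty set). -/
noncomputable def pathSup (f : Link → ℝ) (p : Finset Link) : ℝ :=
  if h : p.Nonempty then p.sup' h f else 0

/-- Capacity of a path: the minimum link capacity along it. -/
noncomputable def pathCap (ℓ : Link → ℝ) : Finset Link → ℝ := pathInf ℓ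

/-- Induced activation time `λ_{ji}(x)` of link `e`. -/
noncomputable def linkTime (ℓ : Link → ℝ) (Ps : Finset (Finset Link))
    (x : Finset Link → ℝ) (e : Link) : ℝ :=
  ∑ p ∈ Ps with e ∈ p, x p * pathCap ℓ p / ℓ e

/-- Rate of a schedule `x`. -/
noncomputable def netRate (ℓ : Link → ℝ) (Ps : Finset (Finset Link))
    (x : Finset Link → ℝ) : ℝ :=
  ∑ p ∈ Ps, x p * pathCap ℓ p

/-- 1-2-1 feasibility for `M = 1`: a nonnegative schedule whose induced link
activation times sum to at most 1 on the links leaving (resp. entering) each node. -/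
def Feasible1 (E : Finset Link) (ℓ : Link → ℝ) (Ps : Finset (Finset Link))
    (x : Finset Link → ℝ) : Prop :=
  (∀ p ∈ Ps, 0 ≤ x p) ∧
  (∀ i : ℕ, ∑ e ∈ E with e.1 = i, linkTime ℓ Ps x e ≤ 1) ∧
  (∀ i : ℕ, ∑ e ∈ E with e.2 = i, linkTime ℓ Ps x e ≤ 1)

/-- The passive-user constraint: every link activation time is below its threshold. -/
def PassiveOK (E : Finset Link) (ℓ : Link → ℝ) (Ps : Finset (Finset Link))
    (θ : Link → ℝ) (x : Finset Link → ℝ) : Prop :=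
  ∀ e ∈ E, linkTime ℓ Ps x e ≤ θ e

/-- The 1-2-1 passive capacity: supremum of rates of feasible schedules
satisfying the passive-user constraint. -/
noncomputable def passiveCapacity (E : Finset Link) (ℓ : Link → ℝ)
    (Ps : Finset (Finset Link)) (θ : Link → ℝ) : ℝ :=
  sSup {r | ∃ x, Feasible1 E ℓ Ps x ∧ PassiveOK E ℓ Ps θ x ∧ netRate ℓ Ps x = r}

/-- The approximate capacity: supremum of rates of feasible schedules. -/
noncomputable def approxCapacity (E : Finset Link) (ℓ : Link → ℝ)
    (Ps : Finset (Finset Link)) : ℝ :=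
  sSup {r | ∃ x, Feasible1 E ℓ Ps x ∧ netRate ℓ Ps x = r}

/-- The schedule `x̂_p = min(x*_p, θ̃_p x*_p / λ̃_p)`, where `θ̃_p` is the minimum
threshold over the links of `p` and `λ̃_p` the maximum activation time `λ_{ji}(x*)`
over the links of `p`. -/
noncomputable def xhat (ℓ θ : Link → ℝ) (Ps : Finset (Finset Link))
    (x : Finset Link → ℝ) (p : Finset Link) : ℝ :=
  min (x p) (pathInf θ p * x p / pathSup (linkTime ℓ Ps x) p)

/-- the schedule x̂ satisfies the passive-user constraint. -/
theorem stmt4 (E : Finset Link) (hE : E.Nonempty) (ℓ θ : Link → ℝ)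
    (hℓ : ∀ e ∈ E, 0 < ℓ e) (Ps : Finset (Finset Link)) (hPs : Ps.Nonempty)
    (hpaths : ∀ p ∈ Ps, p.Nonempty ∧ p ⊆ E)
    (hθ : ∀ e ∈ E, 0 ≤ θ e ∧ θ e ≤ 1)
    (x : Finset Link → ℝ) (hx : Feasible1 E ℓ Ps x)
    (hxpos : ∀ p ∈ Ps, 0 < x p) :
    PassiveOK E ℓ Ps θ (xhat ℓ θ Ps x) := by
  classical
  intro e he
  have hle : 0 < ℓ e := hℓ e he
  have hθe : 0 ≤ θ e := (hθ e he).1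
  set S := Ps.filter (fun p => e ∈ p) with hSdef
  have hsum : linkTime ℓ Ps (xhat ℓ θ Ps x) e
      = ∑ p ∈ S, xhat ℓ θ Ps x p * pathCap ℓ p / ℓ e := rfl
  rcases S.eq_empty_or_nonempty with h0 | hSne
  · rw [hsum, h0, Finset.sum_empty]; exact hθe
  · have hcap : ∀ p ∈ S, 0 < pathCap ℓ p := by
      intro p hp
      obtain ⟨hpPs, hep⟩ := Finset.mem_filter.mp hp
      obtain ⟨hpne, hsub⟩ := hpaths p hpPs
      rw [pathCap, pathInf, dif_pos hpne]
      exact (Finset.lt_inf'_iff hpne).mpr (fun i hi => hℓ i (hsub hi))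
    set L := linkTime ℓ Ps x e with hL
    have hLsum : L = ∑ p ∈ S, x p * pathCap ℓ p / ℓ e := rfl
    have hLpos : 0 < L := by
      rw [hLsum]
      apply Finset.sum_pos _ hSne
      intro p hp
      exact div_pos (mul_pos (hxpos p (Finset.mem_filter.mp hp).1) (hcap p hp)) hle
    have hterm : ∀ p ∈ S, xhat ℓ θ Ps x p * pathCap ℓ p / ℓ e
        ≤ (θ e * x p / L) * pathCap ℓ p / ℓ e := by
      intro p hp
      obtain ⟨hpPs, hep⟩ := Finset.mem_filter.mp hp
      obtain ⟨hpne, hsub⟩ := hpaths p hpPs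
      have hxp := hxpos p hpPs
      have hxhat : xhat ℓ θ Ps x p ≤ θ e * x p / L := by
        refine le_trans (min_le_right _ _) ?_
        apply div_le_div₀ (by positivity) ?_ hLpos ?_
        · exact mul_le_mul_of_nonneg_right
            (by rw [pathInf, dif_pos hpne]; exact Finset.inf'_le θ hep) hxp.le
        · rw [pathSup, dif_pos hpne]; exact Finset.le_sup' (linkTime ℓ Ps x) hep
      have hc := (hcap p hp).le
      gcongr
    calc linkTime ℓ Ps (xhat ℓ θ Ps x) e
        ≤ ∑ p ∈ S, (θ e * x p / L) * pathCap ℓ p / ℓ e := by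
          rw [hsum]; exact Finset.sum_le_sum hterm
      _ = (θ e / L) * ∑ p ∈ S, x p * pathCap ℓ p / ℓ e := by
          rw [Finset.mul_sum]
          exact Finset.sum_congr rfl (fun p hp => by ring)
      _ = θ e := by rw [← hLsum]; field_simp
end

section
/- (Proposition 1) Let x* be a 1-2-1 feasible schedule (M = 1) with x*_p > 0 for every p ∈ 𝒫. For each path p, let θ̃_p = min over links (i,j) of p of θ_{ji} and λ̃_p = max over links (i,j) of p of λ_{ji}(x*). Then the 1-2-1 passive capacity satisfies C ≥ Σ_{p∈𝒫} min( x*_p , θ̃_p·x*_p/λ̃_p )·C_p. -/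
/-!
Common formalization of 1-2-1 mmWave networks (Dogan–Cardone–Fragouli).
A link is a directed edge `(i, j)` between natural-number node labels.
A path is identified with its (finite, nonempty) set of links.
-/

open Finset

/-- Proposition 1: the 1-2-1 passive capacity is at least
`Σ_p min(x*_p, θ̃_p x*_p / λ̃_p) C_p`. -/
theorem stmt5 (E : Finset Link) (hE : E.Nonempty) (ℓ θ : Link → ℝ)
    (hℓ : ∀ e ∈ E, 0 < ℓ e) (Ps : Finset (Finset Link)) (hPs : Ps.Nonempty)
    (hpaths : ∀ p ∈ Ps, p.Nonempty ∧ p ⊆ E)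
    (hθ : ∀ e ∈ E, 0 ≤ θ e ∧ θ e ≤ 1)
    (x : Finset Link → ℝ) (hx : Feasible1 E ℓ Ps x)
    (hxpos : ∀ p ∈ Ps, 0 < x p) :
    passiveCapacity E ℓ Ps θ ≥ ∑ p ∈ Ps, xhat ℓ θ Ps x p * pathCap ℓ p := by

  classical
  set y := xhat ℓ θ Ps x with hy
  have hCpos : ∀ p ∈ Ps, 0 < pathCap ℓ p := by
    intro p hp
    obtain ⟨hne, hsub⟩ := hpaths p hp
    rw [pathCap, pathInf, dif_pos hne, Finset.lt_inf'_iff]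
    exact fun e he => hℓ e (hsub he)
  have hltnnx : ∀ e ∈ E, 0 ≤ linkTime ℓ Ps x e := by
    intro e he
    refine Finset.sum_nonneg fun p hp => ?_
    have hpPs := (Finset.mem_filter.mp hp).1
    exact div_nonneg (mul_nonneg (hxpos p hpPs).le (hCpos p hpPs).le) (hℓ e he).le
  have hynn : ∀ p ∈ Ps, 0 ≤ y p := by
    intro p hp
    obtain ⟨hne, hsub⟩ := hpaths p hp
    have hinf : 0 ≤ pathInf θ p := by
      rw [pathInf, dif_pos hne]
      exact Finset.le_inf' hne _ fun e he => (hθ e (hsub he)).1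
    have hsup : 0 ≤ pathSup (linkTime ℓ Ps x) p := by
      obtain ⟨e, he⟩ := hne
      rw [pathSup, dif_pos ⟨e, he⟩]
      exact le_trans (hltnnx e (hsub he)) (Finset.le_sup' _ he)
    exact le_min (hxpos p hp).le
      (div_nonneg (mul_nonneg hinf (hxpos p hp).le) hsup)
  have hyle : ∀ p, y p ≤ x p := fun p => min_le_left _ _
  have hmono : ∀ e ∈ E, linkTime ℓ Ps y e ≤ linkTime ℓ Ps x e := by
    intro e he
    refine Finset.sum_le_sum fun p hp => ?_
    have hpPs := (Finset.mem_filter.mp hp).1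
    have h1 := hℓ e he
    have h2 := (hCpos p hpPs).le
    gcongr
    exact hyle p
  have hfeas : Feasible1 E ℓ Ps y := by
    refine ⟨hynn, fun i => ?_, fun i => ?_⟩
    · refine le_trans (Finset.sum_le_sum fun e he => hmono e (Finset.mem_filter.mp he).1)
        (hx.2.1 i)
    · refine le_trans (Finset.sum_le_sum fun e he => hmono e (Finset.mem_filter.mp he).1)
        (hx.2.2 i)
  have hpass : PassiveOK E ℓ Ps θ y := by
    intro e he
    by_cases hne : (Ps.filter (fun p => e ∈ p)).Nonempty
    · obtain ⟨p0, hp0⟩ := hne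
      have hlam : 0 < linkTime ℓ Ps x e := by
        refine Finset.sum_pos' (fun p hp => ?_) ⟨p0, hp0, ?_⟩
        · have hpPs := (Finset.mem_filter.mp hp).1
          exact div_nonneg (mul_nonneg (hxpos p hpPs).le (hCpos p hpPs).le) (hℓ e he).le
        · have hpPs := (Finset.mem_filter.mp hp0).1
          exact div_pos (mul_pos (hxpos p0 hpPs) (hCpos p0 hpPs)) (hℓ e he)
      have key : ∀ p ∈ Ps.filter (fun p => e ∈ p),
          y p * pathCap ℓ p / ℓ e
            ≤ θ e / linkTime ℓ Ps x e * (x p * pathCap ℓ p / ℓ e) := by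
        intro p hp
        obtain ⟨hpPs, hep⟩ := Finset.mem_filter.mp hp
        obtain ⟨hne', hsub⟩ := hpaths p hpPs
        have hθle : pathInf θ p ≤ θ e := by
          rw [pathInf, dif_pos hne']; exact Finset.inf'_le _ hep
        have hlamle : linkTime ℓ Ps x e ≤ pathSup (linkTime ℓ Ps x) p := by
          rw [pathSup, dif_pos hne']; exact Finset.le_sup' _ hep
        have hyb : y p ≤ θ e * x p / linkTime ℓ Ps x e := by
          refine le_trans (min_le_right _ _) ?_
          refine div_le_div₀ (mul_nonneg (hθ e he).1 (hxpos p hpPs).le) ?_ hlam hlamle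
          exact mul_le_mul_of_nonneg_right hθle (hxpos p hpPs).le
        have h1 := hℓ e he
        have h2 := (hCpos p hpPs).le
        calc y p * pathCap ℓ p / ℓ e
            ≤ (θ e * x p / linkTime ℓ Ps x e) * pathCap ℓ p / ℓ e := by gcongr
          _ = θ e / linkTime ℓ Ps x e * (x p * pathCap ℓ p / ℓ e) := by ring
      calc linkTime ℓ Ps y e
          ≤ ∑ p ∈ Ps with e ∈ p,
              θ e / linkTime ℓ Ps x e * (x p * pathCap ℓ p / ℓ e) :=
            Finset.sum_le_sum key
        _ = θ e / linkTime ℓ Ps x e * linkTime ℓ Ps x e := by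
            rw [← Finset.mul_sum]; rfl
        _ = θ e := div_mul_cancel₀ _ hlam.ne'
    · have h0 : linkTime ℓ Ps y e = 0 := by
        rw [linkTime, Finset.not_nonempty_iff_eq_empty.mp hne, Finset.sum_empty]
      rw [h0]; exact (hθ e he).1
  have hmem : netRate ℓ Ps y ∈
      {r | ∃ x, Feasible1 E ℓ Ps x ∧ PassiveOK E ℓ Ps θ x ∧ netRate ℓ Ps x = r} :=
    ⟨y, hfeas, hpass, rfl⟩
  have hbdd : BddAbove
      {r | ∃ x, Feasible1 E ℓ Ps x ∧ PassiveOK E ℓ Ps θ x ∧ netRate ℓ Ps x = r} := by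
    refine ⟨∑ e ∈ E, ℓ e, ?_⟩
    rintro r ⟨x', hf, hp, rfl⟩
    have hx'nn : ∀ p ∈ Ps, 0 ≤ x' p := hf.1
    calc netRate ℓ Ps x'
        ≤ ∑ p ∈ Ps, (p.card : ℝ) * (x' p * pathCap ℓ p) := by
          refine Finset.sum_le_sum fun p hp' => ?_
          refine le_mul_of_one_le_left
            (mul_nonneg (hx'nn p hp') (hCpos p hp').le) ?_
          exact_mod_cast Nat.one_le_iff_ne_zero.mpr
            (Finset.card_ne_zero_of_mem (hpaths p hp').1.choose_spec)
      _ = ∑ p ∈ Ps, ∑ e ∈ E with e ∈ p, x' p * pathCap ℓ p := by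
          refine Finset.sum_congr rfl fun p hp' => ?_
          rw [Finset.sum_const, nsmul_eq_mul]
          congr 2
          rw [Finset.filter_mem_eq_inter, Finset.inter_eq_right.mpr (hpaths p hp').2]
      _ = ∑ e ∈ E, ∑ p ∈ Ps with e ∈ p, x' p * pathCap ℓ p := by
          simp only [Finset.sum_filter]
          exact Finset.sum_comm
      _ = ∑ e ∈ E, linkTime ℓ Ps x' e * ℓ e := by
          refine Finset.sum_congr rfl fun e he => ?_
          rw [linkTime, Finset.sum_mul]
          exact Finset.sum_congr rfl fun p _ => (div_mul_cancel₀ _ (hℓ e he).ne').symm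
      _ ≤ ∑ e ∈ E, θ e * ℓ e :=
          Finset.sum_le_sum fun e he =>
            mul_le_mul_of_nonneg_right (hp e he) (hℓ e he).le
      _ ≤ ∑ e ∈ E, ℓ e := by
          refine Finset.sum_le_sum fun e he => ?_
          nth_rewrite 2 [← one_mul (ℓ e)]
          exact mul_le_mul_of_nonneg_right (hθ e he).2 (hℓ e he).le
  exact le_csSup hbdd hmem
end

section
/- (Theorem 1, M = 1, sufficiency) Assume unit link capacities (ℓ_{ji} = 1 for every link, so C_p = 1 for every path) and a uniform threshold θ_{ji} = θ ∈ (0,1] on every link. Let p_1, …, p_{H_e} ∈ 𝒫 be pairwise link-disjoint source–destination paths and let θ_c ∈ [0,1] satisfy H_e ≥ θ_c/θ. Then the schedule assigning activation time θ_c/H_e to each of p_1, …, p_{H_e} and 0 to every other path is 1-2-1 feasible (M = 1), satisfies the passive-user constraint, and has rate θ_c. -/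
/-!
Common formalization of 1-2-1 mmWave networks (Dogan–Cardone–Fragouli).
A link is a directed edge `(i, j)` between natural-number node labels.
A path is identified with its (finite, nonempty) set of links.
-/

open Finset

/-- Theorem 1, M = 1, sufficiency: with unit link capacities and a
uniform threshold `θ`, given `H_e` pairwise link-disjoint paths and `θ_c ∈ [0,1]`
with `H_e ≥ θ_c/θ`, equal time sharing `θ_c/H_e` over these paths is 1-2-1 feasible,
satisfies the passive-user constraint, and achieves rate `θ_c`. -/
theorem stmt7 (E : Finset Link) (hE : E.Nonempty) (ℓ : Link → ℝ)
    (hℓ : ∀ e ∈ E, ℓ e = 1) (Ps : Finset (Finset Link)) (hPs : Ps.Nonempty)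
    (hpaths : ∀ q ∈ Ps, q.Nonempty ∧ q ⊆ E)
    -- each path is simple: at most one link of the path leaves/enters any node
    (hsimple : ∀ q ∈ Ps, ∀ i : ℕ,
      ({e ∈ q | e.1 = i}).card ≤ 1 ∧ ({e ∈ q | e.2 = i}).card ≤ 1)
    (θ : ℝ) (hθpos : 0 < θ) (hθle : θ ≤ 1)
    (He : ℕ) (hHe : 0 < He) (p : Fin He → Finset Link)
    (hpPs : ∀ k, p k ∈ Ps) (hinj : Function.Injective p)
    (hdisj : ∀ k l, k ≠ l → Disjoint (p k) (p l))
    (θc : ℝ) (hθc0 : 0 ≤ θc) (hθc1 : θc ≤ 1)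
    (hbound : θc / θ ≤ (He : ℝ)) :
    Feasible1 E ℓ Ps (fun q => if ∃ k, q = p k then θc / (He : ℝ) else 0) ∧
    PassiveOK E ℓ Ps (fun _ => θ) (fun q => if ∃ k, q = p k then θc / (He : ℝ) else 0) ∧
    netRate ℓ Ps (fun q => if ∃ k, q = p k then θc / (He : ℝ) else 0) = θc := by
  classical
  set x : Finset Link → ℝ := fun q => if ∃ k, q = p k then θc / (He : ℝ) else 0 with hx
  have hHe' : (0 : ℝ) < (He : ℝ) := by exact_mod_cast hHe
  have hc0 : 0 ≤ θc / (He : ℝ) := div_nonneg hθc0 hHe'.le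
  have hcθ : θc / (He : ℝ) ≤ θ := by
    rw [div_le_iff₀ hHe']
    have := (div_le_iff₀ hθpos).mp hbound
    linarith
  have hx0 : ∀ q ∈ Ps, 0 ≤ x q := by
    intro q hq
    simp only [hx]
    split <;> [exact hc0; exact le_refl 0]
  have hcap : ∀ q ∈ Ps, pathCap ℓ q = 1 := by
    intro q hq
    obtain ⟨hne, hsub⟩ := hpaths q hq
    unfold pathCap pathInf
    rw [dif_pos hne]
    apply le_antisymm
    · obtain ⟨e, he⟩ := hne
      calc q.inf' ⟨e, he⟩ ℓ ≤ ℓ e := Finset.inf'_le ℓ he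
        _ = 1 := hℓ e (hsub he)
    · apply Finset.le_inf'
      intro b hb
      rw [hℓ b (hsub hb)]
  have hsum : ∀ e ∈ E, linkTime ℓ Ps x e = ∑ q ∈ Ps with e ∈ q, x q := by
    intro e he
    unfold linkTime
    apply Finset.sum_congr rfl
    intro q hq
    rw [Finset.mem_filter] at hq
    rw [hcap q hq.1, hℓ e he]
    ring
  -- total mass of the schedule
  have himg : Ps.filter (fun q => ∃ k, q = p k) = Finset.image p Finset.univ := by
    ext q
    simp only [Finset.mem_filter, Finset.mem_image, Finset.mem_univ, true_and]
    constructor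
    · rintro ⟨-, k, rfl⟩; exact ⟨k, rfl⟩
    · rintro ⟨k, rfl⟩; exact ⟨hpPs k, k, rfl⟩
  have hxsum : ∑ q ∈ Ps, x q = θc := by
    simp only [hx]
    rw [Finset.sum_ite, Finset.sum_const, Finset.sum_const_zero, add_zero, himg,
      Finset.card_image_of_injective _ hinj, Finset.card_univ, Fintype.card_fin]
    rw [nsmul_eq_mul]
    field_simp
  -- each link is covered by at most one of the chosen paths
  have hcard1 : ∀ e : Link, (Ps.filter fun q => e ∈ q ∧ ∃ k, q = p k).card ≤ 1 := by
    intro e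
    apply Finset.card_le_one.mpr
    intro q1 h1 q2 h2
    rw [Finset.mem_filter] at h1 h2
    obtain ⟨-, he1, k, rfl⟩ := h1
    obtain ⟨-, he2, l, rfl⟩ := h2
    by_contra hne
    have hkl : k ≠ l := fun h => hne (by rw [h])
    exact Finset.disjoint_left.mp (hdisj k l hkl) he1 he2
  have hlink_le : ∀ e ∈ E, linkTime ℓ Ps x e ≤ θc / (He : ℝ) := by
    intro e he
    rw [hsum e he]
    have : ∑ q ∈ Ps with e ∈ q, x q
        = ((Ps.filter fun q => e ∈ q ∧ ∃ k, q = p k).card : ℝ) * (θc / (He : ℝ)) := by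
      simp only [hx]
      rw [Finset.sum_ite, Finset.sum_const, Finset.sum_const_zero, add_zero,
        Finset.filter_filter, nsmul_eq_mul]
    rw [this]
    calc ((Ps.filter fun q => e ∈ q ∧ ∃ k, q = p k).card : ℝ) * (θc / (He : ℝ))
        ≤ 1 * (θc / (He : ℝ)) := by
          apply mul_le_mul_of_nonneg_right _ hc0
          exact_mod_cast hcard1 e
      _ = θc / (He : ℝ) := one_mul _
  -- generic degree bound
  have hdeg : ∀ g : Link → ℕ, (∀ q ∈ Ps, ∀ i : ℕ, ({e ∈ q | g e = i}).card ≤ 1) →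
      ∀ i : ℕ, ∑ e ∈ E with g e = i, linkTime ℓ Ps x e ≤ 1 := by
    intro g hg i
    have h1 : ∑ e ∈ E with g e = i, linkTime ℓ Ps x e
        = ∑ q ∈ Ps, ∑ e ∈ E.filter (fun e => g e = i), (if e ∈ q then x q else 0) := by
      rw [Finset.sum_comm]
      apply Finset.sum_congr rfl
      intro e he
      rw [Finset.mem_filter] at he
      rw [hsum e he.1, Finset.sum_filter]
    rw [h1]
    have h2 : ∀ q ∈ Ps, ∑ e ∈ E.filter (fun e => g e = i), (if e ∈ q then x q else 0) ≤ x q := by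
      intro q hq
      rw [← Finset.sum_filter, Finset.sum_const, nsmul_eq_mul]
      have hsubset : (E.filter (fun e => g e = i)).filter (fun e => e ∈ q)
          ⊆ q.filter (fun e => g e = i) := by
        intro e he
        simp only [Finset.mem_filter] at he ⊢
        exact ⟨he.2, he.1.2⟩
      have hcard : ((E.filter (fun e => g e = i)).filter (fun e => e ∈ q)).card ≤ 1 :=
        le_trans (Finset.card_le_card hsubset) (hg q hq i)
      calc (((E.filter (fun e => g e = i)).filter (fun e => e ∈ q)).card : ℝ) * x q
          ≤ 1 * x q := by
            apply mul_le_mul_of_nonneg_right _ (hx0 q hq)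
            exact_mod_cast hcard
        _ = x q := one_mul _
    calc ∑ q ∈ Ps, ∑ e ∈ E.filter (fun e => g e = i), (if e ∈ q then x q else 0)
        ≤ ∑ q ∈ Ps, x q := Finset.sum_le_sum h2
      _ = θc := hxsum
      _ ≤ 1 := hθc1
  refine ⟨⟨hx0, ?_, ?_⟩, ?_, ?_⟩
  · exact hdeg (fun e => e.1) (fun q hq i => (hsimple q hq i).1)
  · exact hdeg (fun e => e.2) (fun q hq i => (hsimple q hq i).2)
  · intro e he
    exact le_trans (hlink_le e he) hcθ
  · unfold netRate
    calc ∑ q ∈ Ps, x q * pathCap ℓ q = ∑ q ∈ Ps, x q := by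
          apply Finset.sum_congr rfl
          intro q hq
          rw [hcap q hq, mul_one]
      _ = θc := hxsum
end

section
/- (Theorem 1, M > 1) Assume unit link capacities (ℓ_{ji} = 1 for every link, so C_p = 1 for every path) and a uniform threshold θ_{ji} = θ ∈ (0,1] on every link. Let M ≥ 1 be an integer, let p_1, …, p_{H_v} ∈ 𝒫 be pairwise internally vertex-disjoint (hence pairwise link-disjoint) source–destination paths, and let θ_c ∈ [0,1] satisfy H_v ≥ (θ_c/θ)·min(M, H_v). Then the schedule assigning activation time θ_c·min(M, H_v)/H_v to each of p_1, …, p_{H_v} and 0 to every other path is 1-2-1 feasible for parameter M, satisfies the passive-user constraint, and has rate θ_c·min(M, H_v). -/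
/-!
Common formalization of 1-2-1 mmWave networks (Dogan–Cardone–Fragouli).
A link is a directed edge `(i, j)` between natural-number node labels.
A path is identified with its (finite, nonempty) set of links.
-/

open Finset

/-- 1-2-1 feasibility for general beam parameter `M` on an `Nrelay`-relay network with
source node `0` and destination node `Nrelay + 1`: the source may transmit on up to `M`
outgoing links and the destination receive on up to `M` incoming links simultaneously,
while each relay uses one transmit and one receive beam. -/
def FeasibleM (Nrelay M : ℕ) (E : Finset Link) (ℓ : Link → ℝ)
    (Ps : Finset (Finset Link)) (x : Finset Link → ℝ) : Prop :=
  (∀ p ∈ Ps, 0 ≤ x p) ∧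
  (∑ e ∈ E with e.1 = 0, linkTime ℓ Ps x e ≤ (M : ℝ)) ∧
  (∑ e ∈ E with e.2 = Nrelay + 1, linkTime ℓ Ps x e ≤ (M : ℝ)) ∧
  (∀ i : ℕ, 1 ≤ i → i ≤ Nrelay →
    (∑ e ∈ E with e.1 = i, linkTime ℓ Ps x e ≤ 1) ∧
    (∑ e ∈ E with e.2 = i, linkTime ℓ Ps x e ≤ 1))

/-- Node `v` appears in (the link set of) path `q`. -/
def nodeIn (v : ℕ) (q : Finset Link) : Prop := ∃ e ∈ q, e.1 = v ∨ e.2 = v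

/-- Theorem 1, M > 1: with unit link capacities and uniform threshold θ,
given `H_v` pairwise internally vertex-disjoint (hence link-disjoint) paths and
`θ_c ∈ [0,1]` with `H_v ≥ (θ_c/θ)·min(M,H_v)`, the schedule giving each of these paths
activation time `θ_c·min(M,H_v)/H_v` is 1-2-1 feasible for parameter M, satisfies the
passive-user constraint, and has rate `θ_c·min(M,H_v)`. -/
theorem stmt10 (Nrelay : ℕ) (E : Finset Link) (hE : E.Nonempty) (ℓ : Link → ℝ)
    (hℓ : ∀ e ∈ E, ℓ e = 1) (Ps : Finset (Finset Link)) (hPs : Ps.Nonempty)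
    (hpaths : ∀ q ∈ Ps, q.Nonempty ∧ q ⊆ E)
    (hsimple : ∀ q ∈ Ps, ∀ i : ℕ,
      ({e ∈ q | e.1 = i}).card ≤ 1 ∧ ({e ∈ q | e.2 = i}).card ≤ 1)
    (θ : ℝ) (hθpos : 0 < θ) (hθle : θ ≤ 1)
    (M : ℕ) (hM : 1 ≤ M)
    (Hv : ℕ) (hHv : 0 < Hv) (p : Fin Hv → Finset Link)
    (hpPs : ∀ k, p k ∈ Ps) (hinj : Function.Injective p)
    (hvdisj : ∀ k l, k ≠ l → ∀ v : ℕ, v ≠ 0 → v ≠ Nrelay + 1 →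
      ¬(nodeIn v (p k) ∧ nodeIn v (p l)))
    (hldisj : ∀ k l, k ≠ l → Disjoint (p k) (p l))
    (θc : ℝ) (hθc0 : 0 ≤ θc) (hθc1 : θc ≤ 1)
    (hbound : θc / θ * (min M Hv : ℝ) ≤ (Hv : ℝ)) :
    FeasibleM Nrelay M E ℓ Ps
      (fun q => if ∃ k, q = p k then θc * (min M Hv : ℝ) / (Hv : ℝ) else 0) ∧
    PassiveOK E ℓ Ps (fun _ => θ)
      (fun q => if ∃ k, q = p k then θc * (min M Hv : ℝ) / (Hv : ℝ) else 0) ∧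
    netRate ℓ Ps
      (fun q => if ∃ k, q = p k then θc * (min M Hv : ℝ) / (Hv : ℝ) else 0)
      = θc * (min M Hv : ℝ) := by
  classical
  set m : ℝ := min (M : ℝ) (Hv : ℝ) with hm
  set t : ℝ := θc * m / (Hv : ℝ) with ht
  set x : Finset Link → ℝ := fun q => if ∃ k, q = p k then t else 0 with hx
  have hHv' : (0:ℝ) < (Hv : ℝ) := by exact_mod_cast hHv
  have hm0 : 0 ≤ m := le_min (Nat.cast_nonneg M) (Nat.cast_nonneg Hv)
  have ht0 : 0 ≤ t := div_nonneg (mul_nonneg hθc0 hm0) hHv'.le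
  have htθ : t ≤ θ := by
    rw [ht, div_le_iff₀ hHv']
    calc θc * m = θ * (θc / θ * m) := by field_simp
      _ ≤ θ * (Hv : ℝ) := mul_le_mul_of_nonneg_left hbound hθpos.le
  have ht1 : t ≤ 1 := htθ.trans hθle
  have hHvt : (Hv : ℝ) * t = θc * m := by
    rw [ht]; field_simp
  have hθcm : θc * m ≤ (M : ℝ) := by
    calc θc * m ≤ 1 * m := mul_le_mul_of_nonneg_right hθc1 hm0
      _ = m := one_mul m
      _ ≤ (M : ℝ) := min_le_left _ _
  have hxt : ∀ k, x (p k) = t := fun k => if_pos ⟨k, rfl⟩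
  have hx0 : ∀ q, (¬ ∃ k, q = p k) → x q = 0 := fun q h => if_neg h
  have hcap : ∀ q ∈ Ps, pathCap ℓ q = 1 := by
    intro q hq
    obtain ⟨hqne, hqE⟩ := hpaths q hq
    rw [pathCap, pathInf, dif_pos hqne]
    apply le_antisymm
    · obtain ⟨a, ha⟩ := (hpaths q hq).1
      exact (Finset.inf'_le ℓ ha).trans_eq (hℓ a (hqE ha))
    · exact Finset.le_inf' hqne ℓ fun b hb => (hℓ b (hqE hb)).ge
  -- key lemma on link times
  have hlt : ∀ e ∈ E, linkTime ℓ Ps x e = if ∃ k, e ∈ p k then t else 0 := by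
    intro e he
    rw [linkTime]
    have hterm : ∀ q ∈ Ps.filter (fun q => e ∈ q), x q * pathCap ℓ q / ℓ e = x q := by
      intro q hq
      rw [hcap q (Finset.mem_filter.mp hq).1, hℓ e he]; ring
    rw [Finset.sum_congr rfl hterm]
    by_cases hk : ∃ k, e ∈ p k
    · obtain ⟨k0, hk0⟩ := hk
      rw [if_pos ⟨k0, hk0⟩]
      rw [Finset.sum_eq_single_of_mem (p k0)
        (Finset.mem_filter.mpr ⟨hpPs k0, hk0⟩)]
      · exact hxt k0
      · intro q hq hne
        apply hx0
        rintro ⟨l, rfl⟩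
        have hlk : l ≠ k0 := fun h => hne (congrArg p h)
        exact Finset.disjoint_left.mp (hldisj l k0 hlk)
          (Finset.mem_filter.mp hq).2 hk0
    · rw [if_neg hk]
      apply Finset.sum_eq_zero
      intro q hq
      apply hx0
      rintro ⟨l, rfl⟩
      exact hk ⟨l, (Finset.mem_filter.mp hq).2⟩
  -- sum over a subset of E
  have hsum : ∀ F : Finset Link, F ⊆ E →
      ∑ e ∈ F, linkTime ℓ Ps x e
        = ((F.filter (fun e => ∃ k, e ∈ p k)).card : ℝ) * t := by
    intro F hF
    rw [Finset.sum_congr rfl (fun e he => hlt e (hF he)), ← Finset.sum_filter,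
      Finset.sum_const, nsmul_eq_mul]
  -- cardinality bound for source/destination style conditions
  have hcardHv : ∀ F : Finset Link, (∀ k, ((p k) ∩ F).card ≤ 1) →
      ((F.filter (fun e => ∃ k, e ∈ p k)).card) ≤ Hv := by
    intro F hc
    have hsub : (F.filter (fun e => ∃ k, e ∈ p k))
        ⊆ Finset.univ.biUnion (fun k : Fin Hv => (p k) ∩ F) := by
      intro e hef
      obtain ⟨he1, k, hk⟩ := Finset.mem_filter.mp hef
      exact Finset.mem_biUnion.mpr ⟨k, Finset.mem_univ k,
        Finset.mem_inter.mpr ⟨hk, he1⟩⟩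
    calc (F.filter (fun e => ∃ k, e ∈ p k)).card
        ≤ (Finset.univ.biUnion (fun k : Fin Hv => (p k) ∩ F)).card :=
          Finset.card_le_card hsub
      _ ≤ ∑ k : Fin Hv, ((p k) ∩ F).card := Finset.card_biUnion_le
      _ ≤ ∑ _k : Fin Hv, 1 := Finset.sum_le_sum fun k _ => hc k
      _ = Hv := by simp
  -- cardinality bound for relay nodes
  have hcard1 : ∀ i : ℕ, 1 ≤ i → i ≤ Nrelay → ∀ F : Finset Link,
      (∀ e ∈ F, e.1 = i ∨ e.2 = i) →
      (∀ k, ((p k) ∩ F).card ≤ 1) →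
      ((F.filter (fun e => ∃ k, e ∈ p k)).card) ≤ 1 := by
    intro i hi1 hi2 F hcond hc
    apply Finset.card_le_one.mpr
    intro a ha b hb
    obtain ⟨ha1, k, hk⟩ := Finset.mem_filter.mp ha
    obtain ⟨hb1, l, hl⟩ := Finset.mem_filter.mp hb
    have hkl : k = l := by
      by_contra hne
      exact hvdisj k l hne i (by omega) (by omega)
        ⟨⟨a, hk, hcond a ha1⟩, ⟨b, hl, hcond b hb1⟩⟩
    subst hkl
    exact Finset.card_le_one.mp (hc k) a
      (Finset.mem_inter.mpr ⟨hk, ha1⟩) b (Finset.mem_inter.mpr ⟨hl, hb1⟩)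
  have hcap1 : ∀ (cond : Link → Prop) [DecidablePred cond] (F : Finset Link),
      (∀ e ∈ F, cond e) → ∀ k, ((p k) ∩ F).card ≤ ((p k).filter cond).card := by
    intro cond _ F hF k
    apply Finset.card_le_card
    intro e he
    obtain ⟨h1, h2⟩ := Finset.mem_inter.mp he
    exact Finset.mem_filter.mpr ⟨h1, hF e h2⟩
  refine ⟨⟨?_, ?_, ?_, ?_⟩, ?_, ?_⟩
  · -- nonnegativity
    intro q _
    by_cases h : ∃ k, q = p k
    · rw [show x q = t from if_pos h]; exact ht0
    · rw [hx0 q h]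
  · -- source constraint
    rw [hsum (E.filter (fun e => e.1 = 0)) (Finset.filter_subset _ _)]
    have hcard := hcardHv (E.filter (fun e => e.1 = 0)) (fun k =>
      le_trans (hcap1 (fun e => e.1 = 0) _ (fun e he => (Finset.mem_filter.mp he).2) k)
        (hsimple (p k) (hpPs k) 0).1)
    calc (((E.filter (fun e => e.1 = 0)).filter (fun e => ∃ k, e ∈ p k)).card : ℝ) * t
        ≤ (Hv : ℝ) * t := by
          apply mul_le_mul_of_nonneg_right _ ht0
          exact_mod_cast hcard
      _ = θc * m := hHvt
      _ ≤ (M : ℝ) := hθcm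
  · -- destination constraint
    rw [hsum (E.filter (fun e => e.2 = Nrelay + 1)) (Finset.filter_subset _ _)]
    have hcard := hcardHv (E.filter (fun e => e.2 = Nrelay + 1)) (fun k =>
      le_trans (hcap1 (fun e => e.2 = Nrelay + 1) _
          (fun e he => (Finset.mem_filter.mp he).2) k)
        (hsimple (p k) (hpPs k) (Nrelay + 1)).2)
    calc (((E.filter (fun e => e.2 = Nrelay + 1)).filter (fun e => ∃ k, e ∈ p k)).card : ℝ) * t
        ≤ (Hv : ℝ) * t := by
          apply mul_le_mul_of_nonneg_right _ ht0
          exact_mod_cast hcard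
      _ = θc * m := hHvt
      _ ≤ (M : ℝ) := hθcm
  · -- relay constraints
    intro i hi1 hi2
    constructor
    · rw [hsum (E.filter (fun e => e.1 = i)) (Finset.filter_subset _ _)]
      have hcard := hcard1 i hi1 hi2 (E.filter (fun e => e.1 = i))
        (fun e he => Or.inl (Finset.mem_filter.mp he).2)
        (fun k =>
          le_trans (hcap1 (fun e => e.1 = i) _
              (fun e he => (Finset.mem_filter.mp he).2) k)
            (hsimple (p k) (hpPs k) i).1)
      calc (((E.filter (fun e => e.1 = i)).filter (fun e => ∃ k, e ∈ p k)).card : ℝ) * t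
          ≤ 1 * t := by
            apply mul_le_mul_of_nonneg_right _ ht0
            exact_mod_cast hcard
        _ = t := one_mul t
        _ ≤ 1 := ht1
    · rw [hsum (E.filter (fun e => e.2 = i)) (Finset.filter_subset _ _)]
      have hcard := hcard1 i hi1 hi2 (E.filter (fun e => e.2 = i))
        (fun e he => Or.inr (Finset.mem_filter.mp he).2)
        (fun k =>
          le_trans (hcap1 (fun e => e.2 = i) _
              (fun e he => (Finset.mem_filter.mp he).2) k)
            (hsimple (p k) (hpPs k) i).2)
      calc (((E.filter (fun e => e.2 = i)).filter (fun e => ∃ k, e ∈ p k)).card : ℝ) * t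
          ≤ 1 * t := by
            apply mul_le_mul_of_nonneg_right _ ht0
            exact_mod_cast hcard
        _ = t := one_mul t
        _ ≤ 1 := ht1
  · -- passive-user constraint
    intro e he
    rw [hlt e he]
    split
    · exact htθ
    · exact hθpos.le
  · -- rate
    rw [netRate]
    have hterm : ∀ q ∈ Ps, x q * pathCap ℓ q = x q := by
      intro q hq; rw [hcap q hq, mul_one]
    have hterm2 : ∀ q ∈ Ps, x q = if ∃ k, q = p k then t else 0 := by
      intro q _
      by_cases h : ∃ k, q = p k
      · rw [show x q = t from if_pos h, if_pos h]
      · rw [hx0 q h, if_neg h]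
    rw [Finset.sum_congr rfl hterm, Finset.sum_congr rfl hterm2,
      ← Finset.sum_filter, Finset.sum_const, nsmul_eq_mul]
    have hset : Ps.filter (fun q => ∃ k, q = p k) = Finset.univ.image p := by
      ext q
      simp only [Finset.mem_filter, Finset.mem_image, Finset.mem_univ, true_and]
      constructor
      · rintro ⟨_, k, rfl⟩; exact ⟨k, rfl⟩
      · rintro ⟨k, rfl⟩; exact ⟨hpPs k, k, rfl⟩
    rw [hset, Finset.card_image_of_injective _ hinj]
    simp only [Finset.card_univ, Fintype.card_fin]
    rw [hHvt]
end

section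
/- (Theorem 2, second part, M = 1) Assume unit link capacities (ℓ_{ji} = 1 for every link, so C_p = 1 for every path) and per-link thresholds θ_{ji} ∈ [0,1]. Let p_1, …, p_{H_e} ∈ 𝒫 be pairwise link-disjoint source–destination paths with H_e ≥ 1, and for each k let θ_{p_k} = min over links (i,j) of p_k of θ_{ji}. Then the schedule assigning activation time min(1/H_e, θ_{p_k}) to each p_k and 0 to every other path is 1-2-1 feasible (M = 1), satisfies the passive-user constraint, and has rate Σ_{k=1}^{H_e} min(1/H_e, θ_{p_k}). -/
/-!
Common formalization of 1-2-1 mmWave networks (Dogan–Cardone–Fragouli).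
A link is a directed edge `(i, j)` between natural-number node labels.
A path is identified with its (finite, nonempty) set of links.
-/

open Finset

/-- Theorem 2, second part, M = 1: with unit link capacities, given `H_e`
pairwise link-disjoint paths, the schedule giving path `p_k` activation time
`min(1/H_e, θ_{p_k})` (where `θ_{p_k}` is the minimum threshold over the links of `p_k`)
is 1-2-1 feasible, satisfies the passive-user constraint, and has rate
`Σ_k min(1/H_e, θ_{p_k})`. -/
theorem stmt13 (E : Finset Link) (hE : E.Nonempty) (ℓ θ : Link → ℝ)
    (hℓ : ∀ e ∈ E, ℓ e = 1) (Ps : Finset (Finset Link)) (hPs : Ps.Nonempty)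
    (hpaths : ∀ q ∈ Ps, q.Nonempty ∧ q ⊆ E)
    (hsimple : ∀ q ∈ Ps, ∀ i : ℕ,
      ({e ∈ q | e.1 = i}).card ≤ 1 ∧ ({e ∈ q | e.2 = i}).card ≤ 1)
    (hθ : ∀ e ∈ E, 0 ≤ θ e ∧ θ e ≤ 1)
    (He : ℕ) (hHe : 0 < He) (p : Fin He → Finset Link)
    (hpPs : ∀ k, p k ∈ Ps) (hinj : Function.Injective p)
    (hdisj : ∀ k l, k ≠ l → Disjoint (p k) (p l)) :
    Feasible1 E ℓ Ps
      (fun q => if ∃ k, q = p k then min (1 / (He : ℝ)) (pathInf θ q) else 0) ∧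
    PassiveOK E ℓ Ps θ
      (fun q => if ∃ k, q = p k then min (1 / (He : ℝ)) (pathInf θ q) else 0) ∧
    netRate ℓ Ps
      (fun q => if ∃ k, q = p k then min (1 / (He : ℝ)) (pathInf θ q) else 0)
      = ∑ k : Fin He, min (1 / (He : ℝ)) (pathInf θ (p k)) := by
  classical
  set x : Finset Link → ℝ :=
    fun q => if ∃ k, q = p k then min (1 / (He : ℝ)) (pathInf θ q) else 0 with hxdef
  have hHe' : (0 : ℝ) < He := by exact_mod_cast hHe
  set m : Fin He → ℝ := fun k => min (1 / (He : ℝ)) (pathInf θ (p k)) with hmdef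
  have hcap : ∀ q ∈ Ps, pathCap ℓ q = 1 := by
    intro q hq
    obtain ⟨hne, hsub⟩ := hpaths q hq
    simp only [pathCap, pathInf, dif_pos hne]
    have h1 : q.inf' hne ℓ = q.inf' hne (fun _ => (1 : ℝ)) :=
      Finset.inf'_congr hne rfl (fun e he => hℓ e (hsub he))
    rw [h1, Finset.inf'_const]
  have hm_nonneg : ∀ k, 0 ≤ m k := by
    intro k
    obtain ⟨hne, hsub⟩ := hpaths (p k) (hpPs k)
    refine le_min (by positivity) ?_
    simp only [pathInf, dif_pos hne]
    exact Finset.le_inf' hne _ (fun e he => (hθ e (hsub he)).1)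
  have hm_le : ∀ k, m k ≤ 1 / (He : ℝ) := fun k => min_le_left _ _
  have hxpk : ∀ k, x (p k) = m k := fun k => if_pos ⟨k, rfl⟩
  -- sum of x over any set S expressed via the paths p k
  have hsumA : ∀ S : Finset (Finset Link),
      ∑ q ∈ S, x q = ∑ k ∈ Finset.univ.filter (fun k => p k ∈ S), m k := by
    intro S
    have himg : (Finset.univ.filter (fun k => p k ∈ S)).image p ⊆ S := by
      intro q hq
      obtain ⟨k, hk, rfl⟩ := Finset.mem_image.mp hq
      exact (Finset.mem_filter.mp hk).2
    have hzero : ∀ q ∈ S, q ∉ (Finset.univ.filter (fun k => p k ∈ S)).image p →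
        x q = 0 := by
      intro q hq hq'
      by_cases h : ∃ k, q = p k
      · obtain ⟨k, rfl⟩ := h
        exact absurd (Finset.mem_image.mpr ⟨k, Finset.mem_filter.mpr ⟨Finset.mem_univ k, hq⟩,
          rfl⟩) hq'
      · exact if_neg h
    rw [← Finset.sum_subset himg hzero,
      Finset.sum_image (fun a _ b _ h => hinj h)]
    exact Finset.sum_congr rfl (fun k _ => hxpk k)
  -- link time formula
  have hlt : ∀ e ∈ E, linkTime ℓ Ps x e
      = ∑ k ∈ Finset.univ.filter (fun k => e ∈ p k), m k := by
    intro e he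
    unfold linkTime
    have h1 : ∀ q ∈ Ps.filter (fun q => e ∈ q), x q * pathCap ℓ q / ℓ e = x q := by
      intro q hq
      rw [hcap q (Finset.mem_of_mem_filter q hq), hℓ e he]
      ring
    rw [Finset.sum_congr rfl h1, hsumA]
    refine Finset.sum_congr ?_ (fun _ _ => rfl)
    apply Finset.filter_congr
    intro k _
    simp [Finset.mem_filter, hpPs k]
  have hm_bound : ∀ e ∈ E, ∀ k, e ∈ p k → m k ≤ θ e := by
    intro e he k hk
    refine le_trans (min_le_right _ _) ?_
    obtain ⟨hne, hsub⟩ := hpaths (p k) (hpPs k)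
    simp only [pathInf, dif_pos hne]
    exact Finset.inf'_le θ hk
  -- generic feasibility bound
  have hfeas : ∀ A : Finset Link, A ⊆ E →
      (∀ k, (A.filter (fun e => e ∈ p k)).card ≤ 1) →
      ∑ e ∈ A, linkTime ℓ Ps x e ≤ 1 := by
    intro A hAE hAcard
    have h1 : ∑ e ∈ A, linkTime ℓ Ps x e
        = ∑ e ∈ A, ∑ k ∈ Finset.univ.filter (fun k => e ∈ p k), m k :=
      Finset.sum_congr rfl (fun e he => hlt e (hAE he))
    rw [h1]
    have h2 : ∑ e ∈ A, ∑ k ∈ Finset.univ.filter (fun k => e ∈ p k), m k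
        = ∑ k : Fin He, ∑ e ∈ A.filter (fun e => e ∈ p k), m k := by
      simp only [Finset.sum_filter]
      exact Finset.sum_comm
    rw [h2]
    have h3 : ∀ k : Fin He, ∑ e ∈ A.filter (fun e => e ∈ p k), m k ≤ 1 / (He : ℝ) := by
      intro k
      rw [Finset.sum_const, nsmul_eq_mul]
      calc ((A.filter (fun e => e ∈ p k)).card : ℝ) * m k
          ≤ 1 * (1 / (He : ℝ)) := by
            apply mul_le_mul ?_ (hm_le k) (hm_nonneg k) zero_le_one
            exact_mod_cast hAcard k
        _ = 1 / (He : ℝ) := one_mul _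
    calc ∑ k : Fin He, ∑ e ∈ A.filter (fun e => e ∈ p k), m k
        ≤ ∑ k : Fin He, 1 / (He : ℝ) := Finset.sum_le_sum (fun k _ => h3 k)
      _ = (He : ℝ) * (1 / (He : ℝ)) := by
          rw [Finset.sum_const, nsmul_eq_mul, Finset.card_univ, Fintype.card_fin]
      _ = 1 := by field_simp
  refine ⟨⟨?_, ?_, ?_⟩, ?_, ?_⟩
  · -- nonnegativity
    intro q hq
    by_cases h : ∃ k, q = p k
    · obtain ⟨k, rfl⟩ := h
      rw [hxpk]
      exact hm_nonneg k
    · simp only [hxdef]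
      rw [if_neg h]
  · -- outgoing
    intro i
    refine hfeas (E.filter (fun e => e.1 = i)) (Finset.filter_subset _ _) ?_
    intro k
    refine le_trans (Finset.card_le_card ?_) ((hsimple (p k) (hpPs k) i).1)
    intro e he
    simp only [Finset.mem_filter] at he ⊢
    exact ⟨he.2, he.1.2⟩
  · -- incoming
    intro i
    refine hfeas (E.filter (fun e => e.2 = i)) (Finset.filter_subset _ _) ?_
    intro k
    refine le_trans (Finset.card_le_card ?_) ((hsimple (p k) (hpPs k) i).2)
    intro e he
    simp only [Finset.mem_filter] at he ⊢
    exact ⟨he.2, he.1.2⟩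
  · -- passive
    intro e he
    rw [hlt e he]
    set T := Finset.univ.filter (fun k => e ∈ p k) with hT
    rcases T.eq_empty_or_nonempty with h | ⟨k, hk⟩
    · rw [h, Finset.sum_empty]
      exact (hθ e he).1
    · have hTk : T ⊆ {k} := by
        intro l hl
        simp only [hT, Finset.mem_filter] at hk hl
        rw [Finset.mem_singleton]
        by_contra hne
        exact Finset.disjoint_left.mp (hdisj l k hne) hl.2 hk.2
      calc ∑ j ∈ T, m j ≤ ∑ j ∈ ({k} : Finset (Fin He)), m j :=
            Finset.sum_le_sum_of_subset_of_nonneg hTk (fun j _ _ => hm_nonneg j)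
        _ = m k := Finset.sum_singleton _ _
        _ ≤ θ e := hm_bound e he k (Finset.mem_filter.mp hk).2
  · -- rate
    unfold netRate
    have h1 : ∀ q ∈ Ps, x q * pathCap ℓ q = x q := by
      intro q hq; rw [hcap q hq, mul_one]
    rw [Finset.sum_congr rfl h1, hsumA]
    refine Finset.sum_congr ?_ (fun _ _ => rfl)
    rw [Finset.filter_true_of_mem (fun k _ => hpPs k)]
end

section
/- (Theorem 2, second part, M > 1) Assume unit link capacities (ℓ_{ji} = 1 for every link, so C_p = 1 for every path) and per-link thresholds θ_{ji} ∈ [0,1]. Let M > 1 be an integer, let p_1, …, p_{H_v} ∈ 𝒫 be pairwise internally vertex-disjoint (hence pairwise link-disjoint) source–destination paths with H_v ≥ 1, and for each k let θ_{p_k} = min over links (i,j) of p_k of θ_{ji}. Then the schedule assigning activation time min(M/H_v, θ_{p_k}) to each p_k and 0 to every other path is 1-2-1 feasible for parameter M, satisfies the passive-user constraint, and has rate Σ_{k=1}^{H_v} min(M/H_v, θ_{p_k}). -/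
/-!
Common formalization of 1-2-1 mmWave networks (Dogan–Cardone–Fragouli).
A link is a directed edge `(i, j)` between natural-number node labels.
A path is identified with its (finite, nonempty) set of links.
-/

open Finset

/-- If among a finite family of nonnegative reals bounded by `c ≥ 0` at most one
is nonzero, then their sum is at most `c`. -/
lemma sum_le_bound_aux {ι : Type*} [DecidableEq ι] (s : Finset ι) (f : ι → ℝ) (c : ℝ)
    (hc : 0 ≤ c) (h1 : ∀ i ∈ s, f i ≤ c)
    (hsub : ∀ i ∈ s, ∀ j ∈ s, f i ≠ 0 → f j ≠ 0 → i = j) :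
    ∑ i ∈ s, f i ≤ c := by
  classical
  rw [← Finset.sum_filter_ne_zero]
  rcases Finset.eq_empty_or_nonempty (s.filter (fun i => f i ≠ 0)) with h | ⟨i, hi⟩
  · simp [h, hc]
  · have hi' := Finset.mem_filter.mp hi
    have hsing : s.filter (fun i => f i ≠ 0) = {i} := by
      apply Finset.eq_singleton_iff_unique_mem.mpr
      refine ⟨hi, fun j hj => ?_⟩
      have hj' := Finset.mem_filter.mp hj
      exact hsub j hj'.1 i hi'.1 hj'.2 hi'.2
    rw [hsing, Finset.sum_singleton]
    exact h1 i hi'.1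

/-- Theorem 2, second part, M > 1: with unit link capacities, given
`H_v` pairwise internally vertex-disjoint (hence link-disjoint) paths, the schedule
giving path `p_k` activation time `min(M/H_v, θ_{p_k})` is 1-2-1 feasible for
parameter M, satisfies the passive-user constraint, and has rate
`Σ_k min(M/H_v, θ_{p_k})`. -/
theorem stmt14 (Nrelay : ℕ) (E : Finset Link) (hE : E.Nonempty) (ℓ θ : Link → ℝ)
    (hℓ : ∀ e ∈ E, ℓ e = 1) (Ps : Finset (Finset Link)) (hPs : Ps.Nonempty)
    (hpaths : ∀ q ∈ Ps, q.Nonempty ∧ q ⊆ E)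
    (hsimple : ∀ q ∈ Ps, ∀ i : ℕ,
      ({e ∈ q | e.1 = i}).card ≤ 1 ∧ ({e ∈ q | e.2 = i}).card ≤ 1)
    (hθ : ∀ e ∈ E, 0 ≤ θ e ∧ θ e ≤ 1)
    (M : ℕ) (hM : 1 < M)
    (Hv : ℕ) (hHv : 0 < Hv) (p : Fin Hv → Finset Link)
    (hpPs : ∀ k, p k ∈ Ps) (hinj : Function.Injective p)
    (hvdisj : ∀ k l, k ≠ l → ∀ v : ℕ, v ≠ 0 → v ≠ Nrelay + 1 →
      ¬(nodeIn v (p k) ∧ nodeIn v (p l)))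
    (hldisj : ∀ k l, k ≠ l → Disjoint (p k) (p l)) :
    FeasibleM Nrelay M E ℓ Ps
      (fun q => if ∃ k, q = p k then min ((M : ℝ) / (Hv : ℝ)) (pathInf θ q) else 0) ∧
    PassiveOK E ℓ Ps θ
      (fun q => if ∃ k, q = p k then min ((M : ℝ) / (Hv : ℝ)) (pathInf θ q) else 0) ∧
    netRate ℓ Ps
      (fun q => if ∃ k, q = p k then min ((M : ℝ) / (Hv : ℝ)) (pathInf θ q) else 0)
      = ∑ k : Fin Hv, min ((M : ℝ) / (Hv : ℝ)) (pathInf θ (p k)) := by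
  classical
  set x : Finset Link → ℝ :=
    (fun q => if ∃ k, q = p k then min ((M : ℝ) / (Hv : ℝ)) (pathInf θ q) else 0) with hxdef
  set y : Fin Hv → ℝ := fun k => min ((M : ℝ) / (Hv : ℝ)) (pathInf θ (p k)) with hydef
  have hHv' : (0:ℝ) < (Hv:ℝ) := by exact_mod_cast hHv
  have hMHv : (0:ℝ) ≤ (M:ℝ) / Hv := by positivity
  have hne : ∀ k, (p k).Nonempty := fun k => (hpaths _ (hpPs k)).1
  have hsubE : ∀ k, p k ⊆ E := fun k => (hpaths _ (hpPs k)).2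
  have hinf_nonneg : ∀ k, 0 ≤ pathInf θ (p k) := by
    intro k
    rw [pathInf, dif_pos (hne k)]
    exact Finset.le_inf' (hne k) θ (fun e he => (hθ e (hsubE k he)).1)
  have hinf_le_one : ∀ k, pathInf θ (p k) ≤ 1 := by
    intro k
    obtain ⟨e, he⟩ := hne k
    rw [pathInf, dif_pos (hne k)]
    exact le_trans (Finset.inf'_le θ he) (hθ e (hsubE k he)).2
  have hinf_le : ∀ k, ∀ e ∈ p k, pathInf θ (p k) ≤ θ e := by
    intro k e he
    rw [pathInf, dif_pos (hne k)]
    exact Finset.inf'_le θ he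
  have hy0 : ∀ k, 0 ≤ y k := fun k => le_min hMHv (hinf_nonneg k)
  have hy1 : ∀ k, y k ≤ 1 := fun k => le_trans (min_le_right _ _) (hinf_le_one k)
  have hyM : ∀ k, y k ≤ (M:ℝ)/Hv := fun k => min_le_left _ _
  have hxk : ∀ k, x (p k) = y k := by
    intro k; simp only [hxdef, hydef]; rw [if_pos ⟨k, rfl⟩]
  have hx0 : ∀ q, (¬ ∃ k, q = p k) → x q = 0 := by
    intro q hq; simp only [hxdef]; rw [if_neg hq]
  have hxnn : ∀ q ∈ Ps, 0 ≤ x q := by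
    intro q _
    by_cases h : ∃ k, q = p k
    · obtain ⟨k, rfl⟩ := h; rw [hxk]; exact hy0 k
    · rw [hx0 q h]
  have hcap : ∀ q ∈ Ps, pathCap ℓ q = 1 := by
    intro q hq
    obtain ⟨hqne, hqE⟩ := hpaths q hq
    rw [pathCap, pathInf, dif_pos hqne]
    obtain ⟨e, he⟩ := hqne
    apply le_antisymm
    · exact le_trans (Finset.inf'_le ℓ he) (le_of_eq (hℓ e (hqE he)))
    · exact Finset.le_inf' _ ℓ (fun e' he' => (hℓ e' (hqE he')).ge)
  have hlt : ∀ e ∈ E, linkTime ℓ Ps x e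
      = ∑ k ∈ univ.filter (fun k => e ∈ p k), y k := by
    intro e he
    rw [linkTime]
    have h1 : ∑ q ∈ Ps with e ∈ q, x q * pathCap ℓ q / ℓ e
        = ∑ q ∈ Ps.filter (fun q => e ∈ q), x q := by
      refine Finset.sum_congr rfl fun q hq => ?_
      rw [hcap q (Finset.mem_filter.mp hq).1, hℓ e he, mul_one, div_one]
    rw [h1]
    have himg : (univ.filter (fun k => e ∈ p k)).image p ⊆ Ps.filter (fun q => e ∈ q) := by
      intro q hq
      obtain ⟨k, hk, rfl⟩ := Finset.mem_image.mp hq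
      exact Finset.mem_filter.mpr ⟨hpPs k, (Finset.mem_filter.mp hk).2⟩
    rw [← Finset.sum_subset himg]
    · rw [Finset.sum_image (fun a _ b _ h => hinj h)]
      exact Finset.sum_congr rfl fun k _ => hxk k
    · intro q hq hq'
      apply hx0
      rintro ⟨k, rfl⟩
      exact hq' (Finset.mem_image.mpr
        ⟨k, Finset.mem_filter.mpr ⟨Finset.mem_univ k, (Finset.mem_filter.mp hq).2⟩, rfl⟩)
  have hsumA : ∀ A : Finset Link, A ⊆ E →
      ∑ e ∈ A, linkTime ℓ Ps x e
        = ∑ k : Fin Hv, y k * ((A.filter (fun e => e ∈ p k)).card : ℝ) := by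
    intro A hA
    rw [Finset.sum_congr rfl (fun e he => hlt e (hA he))]
    simp only [Finset.sum_filter]
    rw [Finset.sum_comm]
    refine Finset.sum_congr rfl fun k _ => ?_
    rw [← Finset.sum_filter, Finset.sum_const, nsmul_eq_mul]
    ring
  have hcard1 : ∀ (i : ℕ) (k : Fin Hv),
      (((E.filter (fun e => e.1 = i)).filter (fun e => e ∈ p k)).card : ℝ) ≤ 1 := by
    intro i k
    have hsub : (E.filter (fun e => e.1 = i)).filter (fun e => e ∈ p k)
        ⊆ (p k).filter (fun e => e.1 = i) := by
      intro e he
      simp only [Finset.mem_filter] at he ⊢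
      exact ⟨he.2, he.1.2⟩
    have h := le_trans (Finset.card_le_card hsub) ((hsimple _ (hpPs k) i).1)
    exact_mod_cast h
  have hcard2 : ∀ (i : ℕ) (k : Fin Hv),
      (((E.filter (fun e => e.2 = i)).filter (fun e => e ∈ p k)).card : ℝ) ≤ 1 := by
    intro i k
    have hsub : (E.filter (fun e => e.2 = i)).filter (fun e => e ∈ p k)
        ⊆ (p k).filter (fun e => e.2 = i) := by
      intro e he
      simp only [Finset.mem_filter] at he ⊢
      exact ⟨he.2, he.1.2⟩
    have h := le_trans (Finset.card_le_card hsub) ((hsimple _ (hpPs k) i).2)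
    exact_mod_cast h
  have hMbound : ∀ A : Finset Link, A ⊆ E →
      (∀ k, ((A.filter (fun e => e ∈ p k)).card : ℝ) ≤ 1) →
      ∑ e ∈ A, linkTime ℓ Ps x e ≤ (M:ℝ) := by
    intro A hA hc
    rw [hsumA A hA]
    have h1 : ∑ k : Fin Hv, y k * ((A.filter (fun e => e ∈ p k)).card : ℝ)
        ≤ ∑ _k : Fin Hv, (M:ℝ)/Hv := by
      refine Finset.sum_le_sum fun k _ => ?_
      calc y k * ((A.filter (fun e => e ∈ p k)).card : ℝ)
          ≤ ((M:ℝ)/Hv) * 1 := mul_le_mul (hyM k) (hc k) (Nat.cast_nonneg _) hMHv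
        _ = (M:ℝ)/Hv := mul_one _
    refine le_trans h1 ?_
    rw [Finset.sum_const, Finset.card_univ, Fintype.card_fin, nsmul_eq_mul]
    rw [mul_div_cancel₀ _ (ne_of_gt hHv')]
  have hrelay : ∀ A : Finset Link, A ⊆ E → ∀ i : ℕ, i ≠ 0 → i ≠ Nrelay + 1 →
      (∀ k, ((A.filter (fun e => e ∈ p k)).card : ℝ) ≤ 1) →
      (∀ (k : Fin Hv) e, e ∈ A → e ∈ p k → nodeIn i (p k)) →
      ∑ e ∈ A, linkTime ℓ Ps x e ≤ 1 := by
    intro A hA i hi0 hiN hc hnode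
    rw [hsumA A hA]
    apply sum_le_bound_aux _ _ _ zero_le_one
    · intro k _
      calc y k * ((A.filter (fun e => e ∈ p k)).card : ℝ)
          ≤ 1 * 1 := mul_le_mul (hy1 k) (hc k) (Nat.cast_nonneg _) zero_le_one
        _ = 1 := mul_one _
    · intro k _ l _ hk hl
      by_contra hkl
      have hnodek : nodeIn i (p k) := by
        have hnonz : (A.filter (fun e => e ∈ p k)).Nonempty := by
          rcases Finset.eq_empty_or_nonempty (A.filter (fun e => e ∈ p k)) with h | h
          · exfalso; apply hk; rw [h]; simp
          · exact h
        obtain ⟨e, he⟩ := hnonz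
        have he' := Finset.mem_filter.mp he
        exact hnode k e he'.1 he'.2
      have hnodel : nodeIn i (p l) := by
        have hnonz : (A.filter (fun e => e ∈ p l)).Nonempty := by
          rcases Finset.eq_empty_or_nonempty (A.filter (fun e => e ∈ p l)) with h | h
          · exfalso; apply hl; rw [h]; simp
          · exact h
        obtain ⟨e, he⟩ := hnonz
        have he' := Finset.mem_filter.mp he
        exact hnode l e he'.1 he'.2
      exact hvdisj k l hkl i hi0 hiN ⟨hnodek, hnodel⟩
  have hpass : PassiveOK E ℓ Ps θ x := by
    intro e he
    rw [hlt e he]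
    apply sum_le_bound_aux _ _ _ (hθ e he).1
    · intro k hk
      have hek := (Finset.mem_filter.mp hk).2
      exact le_trans (min_le_right _ _) (hinf_le k e hek)
    · intro k hk l hl _ _
      by_contra hkl
      exact Finset.disjoint_left.mp (hldisj k l hkl)
        (Finset.mem_filter.mp hk).2 (Finset.mem_filter.mp hl).2
  have hrate : netRate ℓ Ps x = ∑ k : Fin Hv, y k := by
    rw [netRate]
    have h1 : ∑ q ∈ Ps, x q * pathCap ℓ q = ∑ q ∈ Ps, x q :=
      Finset.sum_congr rfl fun q hq => by rw [hcap q hq, mul_one]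
    rw [h1]
    have himg : (univ : Finset (Fin Hv)).image p ⊆ Ps := by
      intro q hq; obtain ⟨k, _, rfl⟩ := Finset.mem_image.mp hq; exact hpPs k
    rw [← Finset.sum_subset himg]
    · rw [Finset.sum_image (fun a _ b _ h => hinj h)]
      exact Finset.sum_congr rfl fun k _ => hxk k
    · intro q _ hq'
      apply hx0
      rintro ⟨k, rfl⟩
      exact hq' (Finset.mem_image.mpr ⟨k, Finset.mem_univ k, rfl⟩)
  refine ⟨⟨hxnn, ?_, ?_, ?_⟩, hpass, hrate⟩
  · exact hMbound (E.filter (fun e => e.1 = 0)) (Finset.filter_subset _ _) (hcard1 0)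
  · exact hMbound (E.filter (fun e => e.2 = Nrelay + 1)) (Finset.filter_subset _ _)
      (hcard2 (Nrelay + 1))
  · intro i hi1 hiN
    constructor
    · refine hrelay (E.filter (fun e => e.1 = i)) (Finset.filter_subset _ _) i
        (by omega) (by omega) (hcard1 i) ?_
      intro k e heA hep
      exact ⟨e, hep, Or.inl (Finset.mem_filter.mp heA).2⟩
    · refine hrelay (E.filter (fun e => e.2 = i)) (Finset.filter_subset _ _) i
        (by omega) (by omega) (hcard2 i) ?_
      intro k e heA hep
      exact ⟨e, hep, Or.inr (Finset.mem_filter.mp heA).2⟩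
end

section
/- (Extension of Theorem 1 to per-link thresholds, M = 1) Assume unit link capacities (ℓ_{ji} = 1 for every link, so C_p = 1 for every path) and per-link thresholds θ_{ji} ∈ (0,1], and let θ̂ = min over all links of θ_{ji}. Let p_1, …, p_{H_e} ∈ 𝒫 be pairwise link-disjoint source–destination paths and let θ_c ∈ [0,1] satisfy H_e ≥ θ_c/θ̂. Then the schedule assigning activation time θ_c/H_e to each of p_1, …, p_{H_e} and 0 to every other path is 1-2-1 feasible (M = 1), satisfies the passive-user constraint, and has rate θ_c. -/
/-!
Common formalization of 1-2-1 mmWave networks (Dogan–Cardone–Fragouli).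
A link is a directed edge `(i, j)` between natural-number node labels.
A path is identified with its (finite, nonempty) set of links.
-/

open Finset

/-- extension of Theorem 1 to per-link thresholds, M = 1: with unit link
capacities and per-link thresholds `θ` with minimum `θ̂`, given `H_e` pairwise
link-disjoint paths and `θ_c ∈ [0,1]` with `H_e ≥ θ_c/θ̂`, equal time sharing `θ_c/H_e`
over these paths is 1-2-1 feasible, satisfies the passive-user constraint, and
achieves rate `θ_c`. -/
theorem stmt15 (E : Finset Link) (hE : E.Nonempty) (ℓ θ : Link → ℝ)
    (hℓ : ∀ e ∈ E, ℓ e = 1) (Ps : Finset (Finset Link)) (hPs : Ps.Nonempty)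
    (hpaths : ∀ q ∈ Ps, q.Nonempty ∧ q ⊆ E)
    (hsimple : ∀ q ∈ Ps, ∀ i : ℕ,
      ({e ∈ q | e.1 = i}).card ≤ 1 ∧ ({e ∈ q | e.2 = i}).card ≤ 1)
    (hθ : ∀ e ∈ E, 0 < θ e ∧ θ e ≤ 1)
    (He : ℕ) (hHe : 0 < He) (p : Fin He → Finset Link)
    (hpPs : ∀ k, p k ∈ Ps) (hinj : Function.Injective p)
    (hdisj : ∀ k l, k ≠ l → Disjoint (p k) (p l))
    (θc : ℝ) (hθc0 : 0 ≤ θc) (hθc1 : θc ≤ 1)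
    (hbound : θc / E.inf' hE θ ≤ (He : ℝ)) :
    Feasible1 E ℓ Ps (fun q => if ∃ k, q = p k then θc / (He : ℝ) else 0) ∧
    PassiveOK E ℓ Ps θ (fun q => if ∃ k, q = p k then θc / (He : ℝ) else 0) ∧
    netRate ℓ Ps (fun q => if ∃ k, q = p k then θc / (He : ℝ) else 0) = θc := by
  have hHe' : (0:ℝ) < He := Nat.cast_pos.mpr hHe
  set c : ℝ := θc / (He : ℝ) with hc
  set x : Finset Link → ℝ := fun q => if ∃ k, q = p k then c else 0 with hx
  have hc0 : 0 ≤ c := div_nonneg hθc0 (Nat.cast_nonneg He)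
  have hxnn : ∀ q, 0 ≤ x q := by
    intro q; simp only [hx]; split
    · exact hc0
    · exact le_refl 0
  have hxle : ∀ q, x q ≤ c := by
    intro q; simp only [hx]; split
    · exact le_refl c
    · exact hc0
  -- θ̂ bound
  have hθhat : 0 < E.inf' hE θ := by
    obtain ⟨e, he, hee⟩ := Finset.exists_mem_eq_inf' hE θ
    rw [hee]; exact (hθ e he).1
  have hcθ : ∀ e ∈ E, c ≤ θ e := by
    intro e he
    have h1 : θc ≤ (He : ℝ) * E.inf' hE θ := by
      rw [div_le_iff₀ hθhat] at hbound; linarith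
    have h2 : c ≤ E.inf' hE θ := by
      rw [hc, div_le_iff₀ hHe']; linarith [mul_comm (He:ℝ) (E.inf' hE θ)]
    exact h2.trans (Finset.inf'_le θ he)
  have hcap : ∀ q ∈ Ps, pathCap ℓ q = 1 := by
    intro q hq
    obtain ⟨hne, hsub⟩ := hpaths q hq
    unfold pathCap pathInf
    rw [dif_pos hne]
    apply le_antisymm
    · obtain ⟨e, he⟩ := hne
      exact (Finset.inf'_le _ he).trans_eq (hℓ e (hsub he))
    · exact Finset.le_inf' _ _ fun e he => (hℓ e (hsub he)).ge
  have hlt : ∀ e ∈ E, linkTime ℓ Ps x e = ∑ q ∈ Ps with e ∈ q, x q := by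
    intro e he
    unfold linkTime
    refine Finset.sum_congr rfl fun q hq => ?_
    rw [hcap q (Finset.mem_filter.mp hq).1, hℓ e he]
    ring
  -- each link is in at most one active path
  have hltle : ∀ e ∈ E, linkTime ℓ Ps x e ≤ c := by
    intro e he
    rw [hlt e he]
    have h1 : ∑ q ∈ Ps with e ∈ q, x q
        = ∑ q ∈ (Ps.filter (fun q => e ∈ q)).filter (fun q => ∃ k, q = p k), c := by
      rw [Finset.sum_filter (fun q => ∃ k, q = p k) (fun _ => c)]
    rw [h1, Finset.sum_const, nsmul_eq_mul]
    have hcard : ((Ps.filter (fun q => e ∈ q)).filter (fun q => ∃ k, q = p k)).card ≤ 1 := by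
      rw [Finset.card_le_one]
      intro a ha b hb
      simp only [Finset.mem_filter] at ha hb
      obtain ⟨⟨_, hea⟩, k, rfl⟩ := ha
      obtain ⟨⟨_, heb⟩, l, rfl⟩ := hb
      by_contra hne
      have hkl : k ≠ l := fun h => hne (by rw [h])
      exact absurd heb (Finset.disjoint_left.mp (hdisj k l hkl) hea)
    calc (((Ps.filter (fun q => e ∈ q)).filter (fun q => ∃ k, q = p k)).card : ℝ) * c
        ≤ 1 * c := by
          apply mul_le_mul_of_nonneg_right _ hc0
          exact_mod_cast hcard
      _ = c := one_mul c
  have hsum : ∑ q ∈ Ps, x q = θc := by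
    have h1 : ∑ q ∈ Ps, x q = ∑ q ∈ Ps.filter (fun q => ∃ k, q = p k), c := by
      rw [Finset.sum_filter]
    have himg : Ps.filter (fun q => ∃ k, q = p k) = Finset.image p Finset.univ := by
      ext q
      simp only [Finset.mem_filter, Finset.mem_image, Finset.mem_univ, true_and]
      constructor
      · rintro ⟨_, k, rfl⟩; exact ⟨k, rfl⟩
      · rintro ⟨k, rfl⟩; exact ⟨hpPs k, k, rfl⟩
    rw [h1, himg, Finset.sum_const, Finset.card_image_of_injective _ hinj,
      Finset.card_univ, Fintype.card_fin, nsmul_eq_mul, hc]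
    field_simp
  -- degree bound machinery
  have hdeg : ∀ (i : ℕ) (sel : Link → ℕ),
      ∑ e ∈ E with sel e = i, linkTime ℓ Ps x e
        ≤ ∑ q ∈ Ps, x q * ({e ∈ q | sel e = i}).card := by
    intro i sel
    have h1 : ∑ e ∈ E with sel e = i, linkTime ℓ Ps x e
        = ∑ q ∈ Ps, ∑ e ∈ E with sel e = i, (if e ∈ q then x q else 0) := by
      rw [Finset.sum_comm]
      refine Finset.sum_congr rfl fun e he => ?_
      rw [hlt e (Finset.mem_filter.mp he).1, Finset.sum_filter]
    rw [h1]
    refine Finset.sum_le_sum fun q hq => ?_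
    have hsub := (hpaths q hq).2
    have h2 : ∑ e ∈ E with sel e = i, (if e ∈ q then x q else 0)
        = ∑ e ∈ (E.filter (fun e => sel e = i)).filter (fun e => e ∈ q), x q :=
      (Finset.sum_filter (fun e => e ∈ q) (fun _ => x q)).symm
    have h3 : (E.filter (fun e => sel e = i)).filter (fun e => e ∈ q)
        = q.filter (fun e => sel e = i) := by
      ext e
      simp only [Finset.mem_filter]
      constructor
      · rintro ⟨⟨_, h⟩, hq'⟩; exact ⟨hq', h⟩
      · rintro ⟨hq', h⟩; exact ⟨⟨hsub hq', h⟩, hq'⟩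
    rw [h2, h3, Finset.sum_const, nsmul_eq_mul, mul_comm]
  have hdegle : ∀ (i : ℕ) (sel : Link → ℕ) ,
      (∀ q ∈ Ps, ({e ∈ q | sel e = i}).card ≤ 1) →
      ∑ e ∈ E with sel e = i, linkTime ℓ Ps x e ≤ 1 := by
    intro i sel hcard
    refine (hdeg i sel).trans ?_
    calc ∑ q ∈ Ps, x q * ({e ∈ q | sel e = i}).card
        ≤ ∑ q ∈ Ps, x q * 1 := by
          refine Finset.sum_le_sum fun q hq => ?_
          apply mul_le_mul_of_nonneg_left _ (hxnn q)
          exact_mod_cast hcard q hq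
      _ = θc := by simp only [mul_one]; exact hsum
      _ ≤ 1 := hθc1
  refine ⟨⟨fun q _ => hxnn q, ?_, ?_⟩, ?_, ?_⟩
  · intro i; exact hdegle i (fun e => e.1) (fun q hq => (hsimple q hq i).1)
  · intro i; exact hdegle i (fun e => e.2) (fun q hq => (hsimple q hq i).2)
  · intro e he; exact (hltle e he).trans (hcθ e he)
  · unfold netRate
    rw [← hsum]
    exact Finset.sum_congr rfl fun q hq => by rw [hcap q hq, mul_one]
end
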